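/- Let N be odd, |Ψ⟩ = (|N;0⟩+|0;N⟩)/√2, and ρ_sep = ½|N;0⟩⟨N;0| + ½|0;N⟩⟨0;N|. For all operators A₁ in the even subalgebra generated by {a_i, a_i† : i ≤ N} and A₂ in the even subalgebra generated by {a_j, a_j† : j > N}, one has ⟨Ψ|A₁A₂|Ψ⟩ = Tr(ρ_sep A₁A₂). -/

import Mathlib

open Matrix

/-- The Jordan–Wigner operator `a_i = σ_z^{⊗(i−1)} ⊗ σ₋ ⊗ 1^{⊗(n−i)}` on `(ℂ²)^{⊗n}`. -/
noncomputable def jordanWigner (n : ℕ) (i : Fin n) :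
    Matrix (Fin n → Fin 2) (Fin n → Fin 2) ℂ :=
  fun x y => ∏ j : Fin n,
    if j < i then (!![1, 0; 0, -1] : Matrix (Fin 2) (Fin 2) ℂ) (x j) (y j)
    else if j = i then (!![0, 0; 1, 0] : Matrix (Fin 2) (Fin 2) ℂ) (x j) (y j)
    else if x j = y j then 1 else 0

/-- The Fock vacuum: the basis vector annihilated by all `a_i`. -/
noncomputable def jwVac (n : ℕ) : (Fin n → Fin 2) → ℂ :=
  fun x => if x = (fun _ => 1) then 1 else 0

/-- `|N;0⟩ = a₁†⋯a_N†|0⟩` for `2N` modes. -/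
noncomputable def ketN0 (N : ℕ) : (Fin (2 * N) → Fin 2) → ℂ :=
  ((List.ofFn fun k : Fin N =>
    (jordanWigner (2 * N) ⟨k, by omega⟩)ᴴ).prod).mulVec (jwVac (2 * N))

/-- `|0;N⟩ = a_{N+1}†⋯a_{2N}†|0⟩` for `2N` modes. -/
noncomputable def ket0N (N : ℕ) : (Fin (2 * N) → Fin 2) → ℂ :=
  ((List.ofFn fun k : Fin N =>
    (jordanWigner (2 * N) ⟨N + k, by omega⟩)ᴴ).prod).mulVec (jwVac (2 * N))

/-- `|Ψ⟩ = (|N;0⟩ + |0;N⟩)/√2`. -/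
noncomputable def ketPsi (N : ℕ) : (Fin (2 * N) → Fin 2) → ℂ :=
  ((Real.sqrt 2 : ℂ))⁻¹ • (ketN0 N + ket0N N)

/-- The even subalgebra (as a linear span of even monomials) generated by the
creation and annihilation operators of modes `i` with `P i`. -/
noncomputable def evenSpan (N : ℕ) (P : Fin (2 * N) → Prop) :
    Submodule ℂ (Matrix (Fin (2 * N) → Fin 2) (Fin (2 * N) → Fin 2) ℂ) :=
  Submodule.span ℂ {M | ∃ l : List (Matrix (Fin (2 * N) → Fin 2) (Fin (2 * N) → Fin 2) ℂ),
    (∀ A ∈ l, ∃ i : Fin (2 * N), P i ∧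
      (A = jordanWigner (2 * N) i ∨ A = (jordanWigner (2 * N) i)ᴴ)) ∧
    Even l.length ∧ M = l.prod}

/-- The separable density matrix `ρ_sep = ½|N;0⟩⟨N;0| + ½|0;N⟩⟨0;N|`. -/
noncomputable def rhoSep (N : ℕ) : Matrix (Fin (2 * N) → Fin 2) (Fin (2 * N) → Fin 2) ℂ :=
  ((2 : ℂ)⁻¹) • vecMulVec (ketN0 N) (star (ketN0 N)) +
  ((2 : ℂ)⁻¹) • vecMulVec (ket0N N) (star (ket0N N))


namespace JWAux

lemma sz_ne {a b : Fin 2} (h : (!![1,0;0,-1] : Matrix (Fin 2) (Fin 2) ℂ) a b ≠ 0) :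
    a = b := by fin_cases a <;> fin_cases b <;> simp_all

lemma sm_ne {a b : Fin 2} (h : (!![0,0;1,0] : Matrix (Fin 2) (Fin 2) ℂ) a b ≠ 0) :
    a = 1 ∧ b = 0 := by fin_cases a <;> fin_cases b <;> simp_all

lemma fin2_cast_ne {a b : Fin 2} (h : a ≠ b) :
    ((a : ℕ) : ZMod 2) = ((b : ℕ) : ZMod 2) + 1 := by
  fin_cases a <;> fin_cases b <;> first | rfl | (exfalso; exact h rfl)

/-- occupation parity of the first `N` modes (as sum of the `Fin 2` labels). -/
def gpar (N : ℕ) (x : Fin (2 * N) → Fin 2) : ZMod 2 :=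
  ∑ j : Fin (2 * N), if (j : ℕ) < N then ((x j : ℕ) : ZMod 2) else 0

/-- matrices whose nonzero entries shift `gpar` by `c`. -/
noncomputable def shiftSub (N : ℕ) (c : ZMod 2) :
    Submodule ℂ (Matrix (Fin (2 * N) → Fin 2) (Fin (2 * N) → Fin 2) ℂ) where
  carrier := {M | ∀ x y, M x y ≠ 0 → gpar N x = gpar N y + c}
  add_mem' := by
    intro M M' hM hM' x y h
    by_cases h1 : M x y = 0
    · exact hM' x y (by simpa [Matrix.add_apply, h1] using h)
    · exact hM x y h1
  zero_mem' := by intro x y h; simp at h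
  smul_mem' := by
    intro a M hM x y h
    refine hM x y fun h0 => h ?_
    simp [Matrix.smul_apply, h0]

lemma mem_shiftSub {N : ℕ} {c : ZMod 2} {M} :
    M ∈ shiftSub N c ↔ ∀ x y, M x y ≠ 0 → gpar N x = gpar N y + c := Iff.rfl

lemma jw_entry {n : ℕ} {i : Fin n} {x y : Fin n → Fin 2}
    (h : jordanWigner n i x y ≠ 0) :
    x i = 1 ∧ y i = 0 ∧ ∀ j, j ≠ i → x j = y j := by
  simp only [jordanWigner] at h
  rw [Finset.prod_ne_zero_iff] at h
  have hi := h i (Finset.mem_univ i)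
  simp only [lt_irrefl, if_neg, if_pos rfl, if_false, if_true] at hi
  obtain ⟨hx1, hy1⟩ := sm_ne hi
  refine ⟨hx1, hy1, fun j hj => ?_⟩
  have hj' := h j (Finset.mem_univ j)
  by_cases hlt : j < i
  · simp only [if_pos hlt] at hj'
    exact sz_ne hj'
  · simp only [if_neg hlt, if_neg hj] at hj'
    by_contra hne
    simp [hne] at hj'

lemma gpar_shift {N : ℕ} {i : Fin (2 * N)} {x y : Fin (2 * N) → Fin 2}
    (hx : x i ≠ y i) (ha : ∀ j, j ≠ i → x j = y j) :
    gpar N x = gpar N y + (if (i : ℕ) < N then 1 else 0) := by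
  unfold gpar
  rw [← Finset.add_sum_erase _ _ (Finset.mem_univ i),
      ← Finset.add_sum_erase _ _ (Finset.mem_univ i)]
  have hrest : ∑ j ∈ Finset.univ.erase i, (if (j : ℕ) < N then ((x j : ℕ) : ZMod 2) else 0)
      = ∑ j ∈ Finset.univ.erase i, (if (j : ℕ) < N then ((y j : ℕ) : ZMod 2) else 0) := by
    refine Finset.sum_congr rfl fun j hj => ?_
    rw [ha j (Finset.ne_of_mem_erase hj)]
  rw [hrest, add_right_comm]
  congr 1
  by_cases hiN : (i : ℕ) < N
  · simpa only [if_pos hiN] using fin2_cast_ne hx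
  · simp [if_neg hiN]

lemma jw_mem_shift {N : ℕ} (i : Fin (2 * N)) :
    jordanWigner (2 * N) i ∈ shiftSub N (if (i : ℕ) < N then 1 else 0) := by
  intro x y h
  obtain ⟨hx, hy, ha⟩ := jw_entry h
  exact gpar_shift (by rw [hx, hy]; decide) ha

lemma jwH_mem_shift {N : ℕ} (i : Fin (2 * N)) :
    (jordanWigner (2 * N) i)ᴴ ∈ shiftSub N (if (i : ℕ) < N then 1 else 0) := by
  intro x y h
  have h' : jordanWigner (2 * N) i y x ≠ 0 := by
    simpa [Matrix.conjTranspose_apply, star_eq_zero] using h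
  obtain ⟨hy, hx, ha⟩ := jw_entry h'
  have := gpar_shift (i := i) (x := y) (y := x) (by rw [hx, hy]; decide)
    fun j hj => ha j hj
  rw [this, add_assoc, CharTwo.add_self_eq_zero, add_zero]

lemma one_mem_shift {N : ℕ} : (1 : Matrix (Fin (2 * N) → Fin 2) (Fin (2 * N) → Fin 2) ℂ)
    ∈ shiftSub N 0 := by
  intro x y h
  have hxy : x = y := by
    by_contra hne; simp [Matrix.one_apply, hne] at h
  rw [hxy, add_zero]

lemma mul_mem_shift {N : ℕ} {c c' : ZMod 2} {M M'}
    (hM : M ∈ shiftSub N c) (hM' : M' ∈ shiftSub N c') :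
    M * M' ∈ shiftSub N (c + c') := by
  intro x y h
  rw [Matrix.mul_apply] at h
  obtain ⟨z, -, hz⟩ := Finset.exists_ne_zero_of_sum_ne_zero h
  rw [hM x z (left_ne_zero_of_mul hz), hM' z y (right_ne_zero_of_mul hz)]
  ring

lemma prod_mem_shift {N : ℕ} {c : ZMod 2}
    (l : List (Matrix (Fin (2 * N) → Fin 2) (Fin (2 * N) → Fin 2) ℂ))
    (h : ∀ A ∈ l, A ∈ shiftSub N c) :
    l.prod ∈ shiftSub N ((l.length : ZMod 2) * c) := by
  induction l with
  | nil => simpa using one_mem_shift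
  | cons A t ih =>
    have h1 : A ∈ shiftSub N c := h A List.mem_cons_self
    have h2 := ih fun B hB => h B (List.mem_cons_of_mem A hB)
    have hmul := mul_mem_shift h1 h2
    have hcast : ((A :: t).length : ZMod 2) * c = c + (t.length : ZMod 2) * c := by
      push_cast [List.length_cons]; ring
    rw [List.prod_cons, hcast]
    exact hmul

lemma natCast_even {n : ℕ} (h : Even n) : (n : ZMod 2) = 0 := by
  obtain ⟨k, rfl⟩ := h; push_cast; exact CharTwo.add_self_eq_zero _

lemma natCast_odd {n : ℕ} (h : Odd n) : (n : ZMod 2) = 1 := by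
  obtain ⟨k, rfl⟩ := h; push_cast; simp [CharTwo.two_eq_zero]

lemma evenSpan_le_shift₁ (N : ℕ) :
    evenSpan N (fun i => (i : ℕ) < N) ≤ shiftSub N 0 := by
  rw [evenSpan, Submodule.span_le]
  rintro M ⟨l, hl, hev, rfl⟩
  have hall : ∀ A ∈ l, A ∈ shiftSub N 1 := by
    intro A hA
    obtain ⟨i, hi, hform⟩ := hl A hA
    rcases hform with rfl | rfl
    · simpa [if_pos hi] using jw_mem_shift (N := N) i
    · simpa [if_pos hi] using jwH_mem_shift (N := N) i
  have := prod_mem_shift l hall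
  rwa [mul_one, natCast_even hev] at this

lemma evenSpan_le_shift₂ (N : ℕ) :
    evenSpan N (fun i => N ≤ (i : ℕ)) ≤ shiftSub N 0 := by
  rw [evenSpan, Submodule.span_le]
  rintro M ⟨l, hl, hev, rfl⟩
  have hall : ∀ A ∈ l, A ∈ shiftSub N 0 := by
    intro A hA
    obtain ⟨i, hi, hform⟩ := hl A hA
    have hni : ¬ ((i : ℕ) < N) := not_lt.mpr hi
    rcases hform with rfl | rfl
    · simpa [if_neg hni] using jw_mem_shift (N := N) i
    · simpa [if_neg hni] using jwH_mem_shift (N := N) i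
  have := prod_mem_shift l hall
  rwa [mul_zero] at this

lemma gpar_ones (N : ℕ) : gpar N (fun _ => 1) = (N : ZMod 2) := by
  unfold gpar
  rw [Fin.sum_univ_eq_sum_range (fun j => if j < N then (((1 : Fin 2) : ℕ) : ZMod 2) else 0)]
  rw [← Finset.sum_filter]
  have : (Finset.range (2 * N)).filter (· < N) = Finset.range N := by
    ext i; simp; omega
  simp [this]

lemma mulVec_supp {N : ℕ} {c d : ZMod 2}
    {M : Matrix (Fin (2 * N) → Fin 2) (Fin (2 * N) → Fin 2) ℂ} {v}
    (hM : M ∈ shiftSub N c)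
    (hv : ∀ y, v y ≠ 0 → gpar N y = d) :
    ∀ x, M.mulVec v x ≠ 0 → gpar N x = d + c := by
  intro x h
  simp only [Matrix.mulVec, dotProduct] at h
  obtain ⟨y, -, hy⟩ := Finset.exists_ne_zero_of_sum_ne_zero h
  rw [hM x y (left_ne_zero_of_mul hy), hv y (right_ne_zero_of_mul hy)]

lemma jwVac_supp (N : ℕ) : ∀ x, jwVac (2 * N) x ≠ 0 → gpar N x = (N : ZMod 2) := by
  intro x h
  unfold jwVac at h
  by_cases hx : x = fun _ => 1
  · rw [hx]; exact gpar_ones N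
  · simp [hx] at h

lemma ketN0_supp (N : ℕ) : ∀ x, ketN0 N x ≠ 0 → gpar N x = 0 := by
  intro x h
  unfold ketN0 at h
  have hprod : (List.ofFn fun k : Fin N =>
      (jordanWigner (2 * N) ⟨k, by omega⟩)ᴴ).prod ∈ shiftSub N (N : ZMod 2) := by
    have hall : ∀ A ∈ (List.ofFn fun k : Fin N =>
        (jordanWigner (2 * N) (⟨k, by omega⟩ : Fin (2 * N)))ᴴ), A ∈ shiftSub N 1 := by
      intro A hA
      rw [List.mem_ofFn] at hA
      obtain ⟨k, rfl⟩ := hA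
      have hk : ((⟨(k : ℕ), by omega⟩ : Fin (2 * N)) : ℕ) < N := k.2
      simpa [if_pos hk] using jwH_mem_shift (N := N) ⟨k, by omega⟩
    have := prod_mem_shift _ hall
    rwa [mul_one, List.length_ofFn] at this
  have := mulVec_supp hprod (jwVac_supp N) x h
  rw [this, CharTwo.add_self_eq_zero]

lemma ket0N_supp (N : ℕ) : ∀ x, ket0N N x ≠ 0 → gpar N x = (N : ZMod 2) := by
  intro x h
  unfold ket0N at h
  have hprod : (List.ofFn fun k : Fin N =>
      (jordanWigner (2 * N) ⟨N + k, by omega⟩)ᴴ).prod ∈ shiftSub N 0 := by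
    have hall : ∀ A ∈ (List.ofFn fun k : Fin N =>
        (jordanWigner (2 * N) (⟨N + k, by omega⟩ : Fin (2 * N)))ᴴ), A ∈ shiftSub N 0 := by
      intro A hA
      rw [List.mem_ofFn] at hA
      obtain ⟨k, rfl⟩ := hA
      have hk : ¬ (((⟨N + (k : ℕ), by omega⟩ : Fin (2 * N)) : ℕ) < N) := by
        simp
      simpa [if_neg hk] using jwH_mem_shift (N := N) ⟨N + k, by omega⟩
    have := prod_mem_shift _ hall
    rwa [mul_zero] at this
  have := mulVec_supp hprod (jwVac_supp N) x h
  rwa [add_zero] at this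

lemma cross_zero {N : ℕ} {d₁ d₂ : ZMod 2}
    {M : Matrix (Fin (2 * N) → Fin 2) (Fin (2 * N) → Fin 2) ℂ} {u v}
    (hM : M ∈ shiftSub N 0)
    (hu : ∀ x, u x ≠ 0 → gpar N x = d₁) (hv : ∀ y, v y ≠ 0 → gpar N y = d₂)
    (hne : d₁ ≠ d₂) : star u ⬝ᵥ M.mulVec v = 0 := by
  rw [dotProduct]
  refine Finset.sum_eq_zero fun x _ => ?_
  by_cases hux : u x = 0
  · simp [hux]
  · have hMv : M.mulVec v x = 0 := by
      by_contra h
      exact hne ((hu x hux).symm.trans ((mulVec_supp hM hv x h).trans (add_zero _)))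
    simp [hMv]

lemma trace_vecMulVec {m : Type*} [Fintype m] (u w : m → ℂ) (M : Matrix m m ℂ) :
    Matrix.trace (vecMulVec u w * M) = w ⬝ᵥ M.mulVec u := by
  simp only [Matrix.trace, Matrix.diag, Matrix.mul_apply, Matrix.vecMulVec_apply,
    dotProduct, Matrix.mulVec, Finset.mul_sum]
  rw [Finset.sum_comm]
  exact Finset.sum_congr rfl fun y _ => Finset.sum_congr rfl fun x _ => by ring

end JWAux

open JWAux in
/-- For `N` odd, the pure state `|Ψ⟩` and the separable state `ρ_sep` agree on all
products `A₁A₂` of even-subalgebra elements of the two partitions. -/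
theorem pure_state_agrees_with_separable_on_even (N : ℕ) (hN : Odd N)
    (A₁ A₂ : Matrix (Fin (2 * N) → Fin 2) (Fin (2 * N) → Fin 2) ℂ)
    (hA₁ : A₁ ∈ evenSpan N (fun i => (i : ℕ) < N))
    (hA₂ : A₂ ∈ evenSpan N (fun i => N ≤ (i : ℕ))) :
    star (ketPsi N) ⬝ᵥ (A₁ * A₂).mulVec (ketPsi N) =
      Matrix.trace (rhoSep N * (A₁ * A₂)) :=  by
  classical
  set u := ketN0 N with hu
  set v := ket0N N with hv
  set M := A₁ * A₂ with hM
  have hM0 : M ∈ shiftSub N 0 := by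
    have := mul_mem_shift (evenSpan_le_shift₁ N hA₁) (evenSpan_le_shift₂ N hA₂)
    rwa [add_zero] at this
  have hNone : (N : ZMod 2) = 1 := natCast_odd hN
  have hne : (0 : ZMod 2) ≠ (N : ZMod 2) := by rw [hNone]; decide
  have hcross₁ : star u ⬝ᵥ M.mulVec v = 0 :=
    cross_zero hM0 (ketN0_supp N) (ket0N_supp N) hne
  have hcross₂ : star v ⬝ᵥ M.mulVec u = 0 :=
    cross_zero hM0 (ket0N_supp N) (ketN0_supp N) (Ne.symm hne)
  have hc : ((Real.sqrt 2 : ℂ))⁻¹ * ((Real.sqrt 2 : ℂ))⁻¹ = (2 : ℂ)⁻¹ := by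
    rw [← mul_inv]; norm_num [← Complex.ofReal_mul, Real.mul_self_sqrt]
  have hstarc : star ((Real.sqrt 2 : ℂ))⁻¹ = ((Real.sqrt 2 : ℂ))⁻¹ := by
    rw [star_inv₀]; norm_num [Complex.star_def, Complex.conj_ofReal]
  -- left hand side
  have hL : star (ketPsi N) ⬝ᵥ M.mulVec (ketPsi N) =
      (2 : ℂ)⁻¹ * (star u ⬝ᵥ M.mulVec u + star v ⬝ᵥ M.mulVec v) := by
    rw [ketPsi, ← hu, ← hv]
    rw [star_smul, star_add, hstarc]
    rw [Matrix.mulVec_smul, Matrix.mulVec_add]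
    rw [smul_dotProduct, dotProduct_smul, smul_smul, hc]
    rw [add_dotProduct, dotProduct_add, dotProduct_add, hcross₁, hcross₂]
    ring_nf
  -- right hand side
  have hR : Matrix.trace (rhoSep N * M) =
      (2 : ℂ)⁻¹ * (star u ⬝ᵥ M.mulVec u + star v ⬝ᵥ M.mulVec v) := by
    rw [rhoSep, ← hu, ← hv, add_mul, Matrix.smul_mul, Matrix.smul_mul,
      Matrix.trace_add, Matrix.trace_smul, Matrix.trace_smul,
      JWAux.trace_vecMulVec, JWAux.trace_vecMulVec]
    simp only [smul_eq_mul]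
    ring
  rw [hL, hR]
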